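/- Let X be a compact metric space, A₁, A₂ closed subalgebras of C(X) containing constants, f ∈ C(X), and u₀ ∈ A₁ + A₂ a best uniform approximation to f from A₁ + A₂ with f ∉ closure(A₁+A₂). Then there exists a bolt {x₀, x₁, x₂, …} (closed or infinite) extremal for f − u₀, i.e., the values of f − u₀ at consecutive bolt points alternate between +‖f−u₀‖ and −‖f−u₀‖. -/

import Mathlib

open scoped BigOperators

universe u

variable {X : Type u}

def sepSetoid [TopologicalSpace X] (A : Subalgebra ℝ C(X, ℝ)) : Setoid X :=
  ⟨fun a b => ∀ f ∈ A, f a = f b,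
   ⟨fun _ _ _ => rfl, fun h f hf => (h f hf).symm, fun h1 h2 f hf => (h1 f hf).trans (h2 f hf)⟩⟩

def algRel [TopologicalSpace X] (A : Subalgebra ℝ C(X, ℝ)) (a b : X) : Prop :=
  ∀ f ∈ A, f a = f b

def IsBoltFrom (R S : X → X → Prop) {n : ℕ} (x : Fin n → X) : Prop :=
  ∀ i : ℕ, ∀ h : i + 1 < n,
    x ⟨i, by omega⟩ ≠ x ⟨i + 1, h⟩ ∧
    (if i % 2 = 0 then R else S) (x ⟨i, by omega⟩) (x ⟨i + 1, h⟩)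

def IsBolt (R S : X → X → Prop) {n : ℕ} (x : Fin n → X) : Prop :=
  IsBoltFrom R S x ∨ IsBoltFrom S R x

def IsClosedBolt (R S : X → X → Prop) {n : ℕ} (x : Fin n → X) : Prop :=
  ∃ hn : 0 < n, IsBolt R S (Fin.snoc x (x ⟨0, hn⟩))

def IsInfBoltFrom (R S : X → X → Prop) (x : ℕ → X) : Prop :=
  ∀ i : ℕ, x i ≠ x (i + 1) ∧ (if i % 2 = 0 then R else S) (x i) (x (i + 1))

def IsInfBolt (R S : X → X → Prop) (x : ℕ → X) : Prop :=
  IsInfBoltFrom R S x ∨ IsInfBoltFrom S R x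

def sumSet [TopologicalSpace X] (A₁ A₂ : Subalgebra ℝ C(X, ℝ)) : Set C(X, ℝ) :=
  {u | ∃ v₁ ∈ A₁, ∃ v₂ ∈ A₂, u = v₁ + v₂}

def ExtremalFin [TopologicalSpace X] [CompactSpace X] (w : C(X, ℝ)) {n : ℕ} (x : Fin n → X) : Prop :=
  (∀ i, w (x i) = (-1 : ℝ) ^ (i : ℕ) * ‖w‖) ∨ (∀ i, w (x i) = (-1 : ℝ) ^ ((i : ℕ) + 1) * ‖w‖)

def ExtremalSeq [TopologicalSpace X] [CompactSpace X] (w : C(X, ℝ)) (x : ℕ → X) : Prop :=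
  (∀ i, w (x i) = (-1 : ℝ) ^ i * ‖w‖) ∨ (∀ i, w (x i) = (-1 : ℝ) ^ (i + 1) * ‖w‖)

noncomputable def ssint {α : Type*} [MeasurableSpace α] (μ : MeasureTheory.SignedMeasure α) (g : α → ℝ) : ℝ :=
  (∫ a, g a ∂μ.toJordanDecomposition.posPart) - ∫ a, g a ∂μ.toJordanDecomposition.negPart

def measSupport {α : Type*} [TopologicalSpace α] [MeasurableSpace α] (m : MeasureTheory.Measure α) : Set α :=
  {x | ∀ U : Set α, IsOpen U → x ∈ U → 0 < m U}



section PosFunc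

variable {Y : Type*} [TopologicalSpace Y] [CompactSpace Y] [T2Space Y]

/-- A "positive functional-like" map on nonnegative continuous functions. -/
structure IsPosFunc (P : C(Y, ℝ) → ℝ) : Prop where
  add : ∀ f g : C(Y, ℝ), 0 ≤ f → 0 ≤ g → P (f + g) = P f + P g
  nonneg : ∀ f : C(Y, ℝ), 0 ≤ f → 0 ≤ P f
  smul : ∀ (c : ℝ) (f : C(Y, ℝ)), 0 ≤ c → 0 ≤ f → P (c • f) = c * P f

theorem IsPosFunc.mono {P : C(Y, ℝ) → ℝ} (hP : IsPosFunc P) {f g : C(Y, ℝ)}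
    (hf : 0 ≤ f) (hfg : f ≤ g) : P f ≤ P g := by
  have h0 : (0 : C(Y, ℝ)) ≤ g - f := by
    rw [ContinuousMap.le_def] at *
    intro x; simpa using hfg x
  have : g = f + (g - f) := by ring
  rw [this, hP.add f (g - f) hf h0]
  have := hP.nonneg (g - f) h0
  linarith

/-- The support of a positive functional-like map. -/
def posSupp (P : C(Y, ℝ) → ℝ) : Set Y :=
  {x | ∀ U : Set Y, IsOpen U → x ∈ U →
    ∃ g : C(Y, ℝ), 0 ≤ g ∧ g ≤ 1 ∧ (∀ y, y ∉ U → g y = 0) ∧ 0 < P g}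

theorem posSupp_closed (P : C(Y, ℝ) → ℝ) : IsClosed (posSupp P) := by
  rw [← isOpen_compl_iff, isOpen_iff_forall_mem_open]
  intro x hx
  simp only [posSupp, Set.mem_compl_iff, Set.mem_setOf_eq, not_forall] at hx
  obtain ⟨U, hU, hxU, hno⟩ := hx
  refine ⟨U, fun y hy => ?_, hU, hxU⟩
  simp only [posSupp, Set.mem_compl_iff, Set.mem_setOf_eq, not_forall]
  exact ⟨U, hU, hy, hno⟩

end PosFunc

set_option linter.unusedSectionVars false
set_option maxHeartbeats 2000000

section Vanish

variable {Y : Type*} [TopologicalSpace Y] [CompactSpace Y] [T2Space Y]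

theorem vanish_aux {P : C(Y, ℝ) → ℝ} (hP : IsPosFunc P) (L : List (Set Y))
    (hLopen : ∀ U ∈ L, IsOpen U)
    (hLnull : ∀ U ∈ L, ∀ g : C(Y, ℝ), 0 ≤ g → g ≤ 1 → (∀ y, y ∉ U → g y = 0) → P g ≤ 0) :
    ∀ g : C(Y, ℝ), 0 ≤ g → g ≤ 1 → (∀ y, (∀ U ∈ L, y ∉ U) → g y = 0) → P g = 0 := by
  induction L with
  | nil =>
    intro g hg0 hg1 hgv
    have : g = 0 := by
      ext y; exact hgv y (by simp)
    rw [this]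
    have := hP.add 0 0 le_rfl le_rfl
    simp at this
    linarith
  | cons U L ih =>
    intro g hg0 hg1 hgv
    have hU : IsOpen U := hLopen U (by simp)
    have hLopen' : ∀ V ∈ L, IsOpen V := fun V hV => hLopen V (by simp [hV])
    have hLnull' : ∀ V ∈ L, ∀ g : C(Y, ℝ), 0 ≤ g → g ≤ 1 → (∀ y, y ∉ V → g y = 0) → P g ≤ 0 :=
      fun V hV => hLnull V (by simp [hV])
    have key : ∀ ε : ℝ, 0 < ε → P g ≤ ε * P 1 := by
      intro ε hε
      -- the set where g ≥ ε
      set D : Set Y := {z | ε ≤ g z} with hD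
      have hDclosed : IsClosed D := isClosed_le continuous_const g.continuous
      have hDcpt : IsCompact D := hDclosed.isCompact
      set W : Set Y := ⋃ V ∈ L, V with hW
      have hWopen : IsOpen W := isOpen_biUnion hLopen'
      have hDUW : D ⊆ U ∪ W := by
        intro z hz
        by_contra hc
        simp only [Set.mem_union, not_or] at hc
        have hzv : g z = 0 := by
          apply hgv z
          intro V hV
          rcases List.mem_cons.mp hV with rfl | hV'
          · exact hc.1
          · intro hzV
            exact hc.2 (Set.mem_biUnion hV' hzV)
        have : ε ≤ g z := hz
        linarith
      obtain ⟨K₁, K₂, hK₁c, hK₂c, hK₁U, hK₂W, hDK⟩ := hDcpt.binary_compact_cover hU hWopen hDUW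
      -- Urysohn: χ = 0 on Uᶜ, 1 on K₁
      obtain ⟨χ, hχ0, hχ1, hχmem⟩ :=
        exists_continuous_zero_one_of_isClosed hU.isClosed_compl hK₁c.isClosed
          (by
            rw [Set.disjoint_compl_left_iff_subset]
            exact hK₁U)
      set g' : C(Y, ℝ) := (g - ε • (1 : C(Y, ℝ))) ⊔ 0 with hg'
      have hg'0 : (0 : C(Y, ℝ)) ≤ g' := by
        rw [ContinuousMap.le_def]; intro x
        simp [hg']
      have hg'1 : g' ≤ 1 := by
        rw [ContinuousMap.le_def]; intro x
        have := (ContinuousMap.le_def.mp hg1) x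
        have := (ContinuousMap.le_def.mp hg0) x
        simp only [hg', ContinuousMap.sup_apply, ContinuousMap.sub_apply,
          ContinuousMap.smul_apply, ContinuousMap.one_apply, ContinuousMap.zero_apply,
          ContinuousMap.coe_one, Pi.one_apply, smul_eq_mul, mul_one]
        simp only [ContinuousMap.one_apply] at *
        rw [sup_le_iff]
        constructor <;> simp_all <;> linarith
      have hg'van : ∀ z, z ∉ D → g' z = 0 := by
        intro z hz
        simp only [hD, Set.mem_setOf_eq, not_le] at hz
        simp only [hg', ContinuousMap.sup_apply, ContinuousMap.sub_apply,
          ContinuousMap.smul_apply, ContinuousMap.one_apply, ContinuousMap.zero_apply,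
          smul_eq_mul, mul_one]
        rw [sup_eq_right]
        linarith
      set g₁ : C(Y, ℝ) := g' * χ with hg₁
      set g₂ : C(Y, ℝ) := g' * ((1 : C(Y, ℝ)) - χ) with hg₂
      have hχx : ∀ x, 0 ≤ χ x ∧ χ x ≤ 1 := by
        intro x; exact ⟨(hχmem x).1, (hχmem x).2⟩
      have hg₁0 : (0 : C(Y, ℝ)) ≤ g₁ := by
        rw [ContinuousMap.le_def]; intro x
        simp only [hg₁, ContinuousMap.mul_apply, ContinuousMap.zero_apply]
        exact mul_nonneg ((ContinuousMap.le_def.mp hg'0) x) (hχx x).1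
      have hg₁1 : g₁ ≤ 1 := by
        rw [ContinuousMap.le_def]; intro x
        simp only [hg₁, ContinuousMap.mul_apply, ContinuousMap.one_apply]
        calc g' x * χ x ≤ 1 * 1 := by
              apply mul_le_mul
              · simpa using (ContinuousMap.le_def.mp hg'1) x
              · exact (hχx x).2
              · exact (hχx x).1
              · norm_num
          _ = 1 := by norm_num
      have hg₂0 : (0 : C(Y, ℝ)) ≤ g₂ := by
        rw [ContinuousMap.le_def]; intro x
        simp only [hg₂, ContinuousMap.mul_apply, ContinuousMap.zero_apply,
          ContinuousMap.sub_apply, ContinuousMap.one_apply]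
        exact mul_nonneg ((ContinuousMap.le_def.mp hg'0) x) (by linarith [(hχx x).2])
      have hg₂1 : g₂ ≤ 1 := by
        rw [ContinuousMap.le_def]; intro x
        simp only [hg₂, ContinuousMap.mul_apply, ContinuousMap.one_apply,
          ContinuousMap.sub_apply]
        calc g' x * (1 - χ x) ≤ 1 * 1 := by
              apply mul_le_mul
              · simpa using (ContinuousMap.le_def.mp hg'1) x
              · linarith [(hχx x).1]
              · linarith [(hχx x).2]
              · norm_num
          _ = 1 := by norm_num
      have hPg₁ : P g₁ ≤ 0 := by
        apply hLnull U (by simp) g₁ hg₁0 hg₁1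
        intro y hy
        simp only [hg₁, ContinuousMap.mul_apply]
        rw [hχ0 hy]
        simp
      have hPg₂ : P g₂ = 0 := by
        apply ih hLopen' hLnull' g₂ hg₂0 hg₂1
        intro y hy
        have hyW : y ∉ W := by
          intro hyW
          obtain ⟨V, hV, hyV⟩ := Set.mem_iUnion₂.mp hyW
          exact hy V hV hyV
        by_cases hyD : y ∈ D
        · have hyK₁ : y ∈ K₁ := by
            have := hDK ▸ hyD
            rcases this with h | h
            · exact h
            · exact absurd (hK₂W h) hyW
          simp only [hg₂, ContinuousMap.mul_apply, ContinuousMap.sub_apply,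
            ContinuousMap.one_apply]
          rw [hχ1 hyK₁]
          simp
        · simp only [hg₂, ContinuousMap.mul_apply]
          rw [hg'van y hyD]
          simp
      have hsplit : g' = g₁ + g₂ := by
        ext x
        simp only [hg₁, hg₂, ContinuousMap.add_apply, ContinuousMap.mul_apply,
          ContinuousMap.sub_apply, ContinuousMap.one_apply]
        ring
      have hPg' : P g' = 0 := by
        rw [hsplit, hP.add g₁ g₂ hg₁0 hg₂0]
        have := hP.nonneg g₁ hg₁0
        linarith
      have hgle : g ≤ ε • (1 : C(Y, ℝ)) + g' := by
        rw [ContinuousMap.le_def]; intro x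
        simp only [ContinuousMap.add_apply, ContinuousMap.smul_apply, ContinuousMap.one_apply,
          hg', ContinuousMap.sup_apply, ContinuousMap.sub_apply, ContinuousMap.zero_apply,
          smul_eq_mul, mul_one]
        rcases le_total (g x) ε with h | h
        · have : (0 : ℝ) ≤ (g x - ε) ⊔ 0 := le_sup_right
          linarith
        · have : g x - ε ≤ (g x - ε) ⊔ 0 := le_sup_left
          linarith
      have hεone : (0 : C(Y, ℝ)) ≤ ε • (1 : C(Y, ℝ)) := by
        rw [ContinuousMap.le_def]; intro x
        simp only [ContinuousMap.smul_apply, ContinuousMap.one_apply, ContinuousMap.zero_apply,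
          smul_eq_mul, mul_one]
        linarith
      calc P g ≤ P (ε • (1 : C(Y, ℝ)) + g') := hP.mono hg0 hgle
        _ = P (ε • (1 : C(Y, ℝ))) + P g' := hP.add _ _ hεone hg'0
        _ = ε * P 1 + 0 := by
            rw [hPg', hP.smul ε 1 (le_of_lt hε) (by rw [ContinuousMap.le_def]; intro x; simp)]
        _ = ε * P 1 := by ring
    -- conclude P g ≤ 0 and hence = 0
    have hP1 : 0 ≤ P 1 := hP.nonneg 1 (by rw [ContinuousMap.le_def]; intro x; simp)
    have hle : P g ≤ 0 := by
      by_contra hc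
      push_neg at hc
      rcases eq_or_lt_of_le hP1 with h1 | h1
      · have := key 1 one_pos
        rw [← h1] at this
        linarith
      · have := key (P g / (2 * P 1)) (by positivity)
        rw [div_mul_eq_mul_div, mul_comm] at this
        have h2 : P 1 * P g / (2 * P 1) = P g / 2 := by
          field_simp
        rw [h2] at this
        linarith
    exact le_antisymm hle (hP.nonneg g hg0)

end Vanish

section Supp

variable {Y : Type*} [TopologicalSpace Y] [CompactSpace Y] [T2Space Y]

theorem posSupp_vanish {P : C(Y, ℝ) → ℝ} (hP : IsPosFunc P) (g : C(Y, ℝ))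
    (hg0 : 0 ≤ g) (hg1 : g ≤ 1) (V : Set Y) (hV : IsOpen V) (hsupp : posSupp P ⊆ V)
    (hgv : ∀ y ∈ V, g y = 0) : P g = 0 := by
  -- cover the compact complement of V by null neighborhoods
  have hnull : ∀ z : Y, z ∈ Vᶜ → ∃ U : Set Y, IsOpen U ∧ z ∈ U ∧
      ∀ g' : C(Y, ℝ), 0 ≤ g' → g' ≤ 1 → (∀ y, y ∉ U → g' y = 0) → P g' ≤ 0 := by
    intro z hz
    have hzn : z ∉ posSupp P := fun hzs => hz (hsupp hzs)
    simp only [posSupp, Set.mem_setOf_eq, not_forall] at hzn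
    obtain ⟨U, hU, hzU, hno⟩ := hzn
    refine ⟨U, hU, hzU, fun g' h0 h1 hv => ?_⟩
    by_contra hc
    push_neg at hc
    exact hno ⟨g', h0, h1, hv, hc⟩
  classical
  choose U hUopen hUmem hUnull using hnull
  have hVc : IsCompact (Vᶜ : Set Y) := hV.isClosed_compl.isCompact
  have hcover : (Vᶜ : Set Y) ⊆ ⋃ z : (Vᶜ : Set Y), U z.1 z.2 :=
    fun z hz => Set.mem_iUnion.mpr ⟨⟨z, hz⟩, hUmem z hz⟩
  obtain ⟨t, ht⟩ := hVc.elim_finite_subcover (fun z : (Vᶜ : Set Y) => U z.1 z.2)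
    (fun z => hUopen z.1 z.2) hcover
  set L : List (Set Y) := t.toList.map (fun z => U z.1 z.2) with hL
  have hmem : ∀ S ∈ L, ∃ z : (Vᶜ : Set Y), z ∈ t ∧ S = U z.1 z.2 := by
    intro S hS
    simp only [hL, List.mem_map, Finset.mem_toList] at hS
    obtain ⟨z, hz, rfl⟩ := hS
    exact ⟨z, hz, rfl⟩
  apply vanish_aux hP L
  · intro S hS
    obtain ⟨z, _, rfl⟩ := hmem S hS
    exact hUopen z.1 z.2
  · intro S hS
    obtain ⟨z, _, rfl⟩ := hmem S hS
    exact hUnull z.1 z.2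
  · exact hg0
  · exact hg1
  · intro y hy
    by_cases hyV : y ∈ V
    · exact hgv y hyV
    · exfalso
      have := ht hyV
      obtain ⟨z, hz, hyz⟩ := by
        simpa only [Set.mem_iUnion, exists_prop] using this
      refine hy (U z.1 z.2) ?_ hyz
      simp only [hL, List.mem_map, Finset.mem_toList]
      exact ⟨z, hz, rfl⟩

theorem posSupp_nonempty {P : C(Y, ℝ) → ℝ} (hP : IsPosFunc P) (h1 : 0 < P 1) :
    (posSupp P).Nonempty := by
  by_contra hc
  rw [Set.not_nonempty_iff_eq_empty] at hc
  have : P 1 = 0 := by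
    apply posSupp_vanish hP 1 (by rw [ContinuousMap.le_def]; intro x; simp) le_rfl ∅
      isOpen_empty (by rw [hc]) (by simp)
  linarith

end Supp

section BoltStep

variable {Y : Type*} [TopologicalSpace Y] [CompactSpace Y] [T2Space Y]

theorem boltStep {P Q : C(Y, ℝ) → ℝ} (hP : IsPosFunc P) (hQ : IsPosFunc Q)
    (A : Subalgebra ℝ C(Y, ℝ))
    (hPQ : ∀ h ∈ A, (0 : C(Y, ℝ)) ≤ h → P h = Q h)
    (hQ1 : 0 < Q 1) {x : Y} (hx : x ∈ posSupp P) :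
    ∃ y ∈ posSupp Q, algRel A x y := by
  by_contra hcon
  push_neg at hcon
  -- every y in the support of Q is separated from x by some element of A
  have hsep : ∀ y ∈ posSupp Q, ∃ g ∈ A, g y ≠ g x := by
    intro y hy
    have := hcon y hy
    simp only [algRel, not_forall] at this
    obtain ⟨g, hg, hne⟩ := this
    exact ⟨g, hg, fun h => hne h.symm⟩
  set T : Set Y := posSupp Q with hT
  have hTclosed : IsClosed T := posSupp_closed Q
  have hTcpt : IsCompact T := hTclosed.isCompact
  rcases T.eq_empty_or_nonempty with hTe | hTne
  · -- empty support: Q 1 = 0, contradiction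
    have : Q 1 = 0 :=
      posSupp_vanish hQ 1 (by rw [ContinuousMap.le_def]; intro z; simp) le_rfl ∅ isOpen_empty
        hTe.subset (by simp)
    linarith
  -- build q ∈ A, q ≥ 0, q x = 0, q > 0 on T
  have hpy : ∀ y : Y, y ∈ T → ∃ p : C(Y, ℝ), p ∈ A ∧ (0 : C(Y, ℝ)) ≤ p ∧ p x = 0 ∧ 0 < p y := by
    intro y hy
    obtain ⟨g, hgA, hgne⟩ := hsep y hy
    refine ⟨(g - algebraMap ℝ C(Y, ℝ) (g x)) ^ 2, ?_, ?_, ?_, ?_⟩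
    · exact pow_mem (sub_mem hgA (Subalgebra.algebraMap_mem A (g x))) 2
    · rw [ContinuousMap.le_def]; intro z
      simp only [ContinuousMap.zero_apply, ContinuousMap.pow_apply, ContinuousMap.sub_apply]
      positivity
    · simp [ContinuousMap.pow_apply, ContinuousMap.sub_apply]
    · simp only [ContinuousMap.pow_apply, ContinuousMap.sub_apply]
      have : g y - g x ≠ 0 := by
        simp only [ne_eq, sub_eq_zero]
        intro hcc
        exact hgne (by simpa using hcc)
      have h2 : (0:ℝ) < (g y - (algebraMap ℝ C(Y,ℝ) (g x)) y)^2 := by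
        have h3 : (algebraMap ℝ C(Y,ℝ) (g x)) y = g x := by
          simp [Algebra.algebraMap_eq_smul_one]
        rw [h3]
        positivity
      simpa using h2
  classical
  choose p hpA hp0 hpx hppos using hpy
  have hcover : T ⊆ ⋃ y : T, {z | 0 < p y.1 y.2 z} :=
    fun z hz => Set.mem_iUnion.mpr ⟨⟨z, hz⟩, hppos z hz⟩
  obtain ⟨t, ht⟩ := hTcpt.elim_finite_subcover (fun y : T => {z | 0 < p y.1 y.2 z})
    (fun y => isOpen_lt continuous_const (p y.1 y.2).continuous) hcover
  set q : C(Y, ℝ) := ∑ y ∈ t, p y.1 y.2 with hq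
  have hqA : q ∈ A := Subalgebra.sum_mem A fun y _ => hpA y.1 y.2
  have hq0 : (0 : C(Y, ℝ)) ≤ q := by
    rw [ContinuousMap.le_def]; intro z
    simp only [hq, ContinuousMap.zero_apply, ContinuousMap.coe_sum, Finset.sum_apply]
    exact Finset.sum_nonneg fun y _ => (ContinuousMap.le_def.mp (hp0 y.1 y.2)) z
  have hqx : q x = 0 := by
    simp only [hq, ContinuousMap.coe_sum, Finset.sum_apply]
    exact Finset.sum_eq_zero fun y _ => hpx y.1 y.2
  have hqT : ∀ z ∈ T, 0 < q z := by
    intro z hz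
    obtain ⟨y, hyt, hyz⟩ := by
      simpa only [Set.mem_iUnion, exists_prop] using ht hz
    simp only [hq, ContinuousMap.coe_sum, Finset.sum_apply]
    refine Finset.sum_pos' (fun y' _ => (ContinuousMap.le_def.mp (hp0 y'.1 y'.2)) z) ⟨y, hyt, ?_⟩
    exact hyz
  -- δ := min of q on T
  obtain ⟨z₀, hz₀T, hz₀min⟩ := hTcpt.exists_isMinOn hTne q.continuous.continuousOn
  set δ : ℝ := q z₀ with hδ
  have hδpos : 0 < δ := hqT z₀ hz₀T
  have hδT : ∀ z ∈ T, δ ≤ q z := fun z hz => hz₀min hz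
  set B : ℝ := ‖q‖ with hB
  have hqB : ∀ z, q z ≤ B := by
    intro z
    calc q z ≤ |q z| := le_abs_self _
      _ ≤ B := q.norm_coe_le_norm z
  have hδB : δ ≤ B := le_trans (hδT z₀ hz₀T) (hqB z₀)
  have hBpos : 0 < B := lt_of_lt_of_le hδpos hδB
  -- r := 1 - q / B ∈ A
  set r : C(Y, ℝ) := 1 - B⁻¹ • q with hr
  have hrA : r ∈ A := sub_mem (one_mem A) (Subalgebra.smul_mem A hqA B⁻¹)
  have hr_apply : ∀ z, r z = 1 - B⁻¹ * q z := by
    intro z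
    simp [hr, ContinuousMap.sub_apply, ContinuousMap.smul_apply, ContinuousMap.one_apply]
  have hr0 : ∀ z, 0 ≤ r z := by
    intro z
    rw [hr_apply]
    have := hqB z
    have h1 : B⁻¹ * q z ≤ B⁻¹ * B := by
      apply mul_le_mul_of_nonneg_left this (by positivity)
    rw [inv_mul_cancel₀ (ne_of_gt hBpos)] at h1
    linarith
  have hr1 : ∀ z, r z ≤ 1 := by
    intro z
    rw [hr_apply]
    have hz := (ContinuousMap.le_def.mp hq0) z
    simp only [ContinuousMap.zero_apply] at hz
    have : 0 ≤ B⁻¹ * q z := by positivity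
    linarith
  have hrx : r x = 1 := by rw [hr_apply, hqx]; ring
  set θ : ℝ := 1 - B⁻¹ * δ with hθ
  have hθ0 : 0 ≤ θ := by
    have h1 : B⁻¹ * δ ≤ B⁻¹ * B := mul_le_mul_of_nonneg_left hδB (by positivity)
    rw [inv_mul_cancel₀ (ne_of_gt hBpos)] at h1
    simp only [hθ]; linarith
  have hθ1 : θ < 1 := by
    have : 0 < B⁻¹ * δ := by positivity
    simp only [hθ]; linarith
  have hrT : ∀ z ∈ T, r z ≤ θ := by
    intro z hz
    rw [hr_apply]
    have h1 : B⁻¹ * δ ≤ B⁻¹ * q z := mul_le_mul_of_nonneg_left (hδT z hz) (by positivity)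
    simp only [hθ]; linarith
  -- choose k with θ^k < 1/4
  obtain ⟨k, hk⟩ := exists_pow_lt_of_lt_one (show (0:ℝ) < 1/4 by norm_num) hθ1
  set s₀ : C(Y, ℝ) := r ^ k with hs₀
  have hs₀A : s₀ ∈ A := pow_mem hrA k
  have hs₀_apply : ∀ z, s₀ z = (r z) ^ k := fun z => ContinuousMap.pow_apply r k z
  have hs₀0 : ∀ z, 0 ≤ s₀ z := fun z => by rw [hs₀_apply]; exact pow_nonneg (hr0 z) k
  have hs₀1 : ∀ z, s₀ z ≤ 1 := fun z => by
    rw [hs₀_apply]; exact pow_le_one₀ (hr0 z) (hr1 z)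
  have hs₀x : s₀ x = 1 := by rw [hs₀_apply, hrx, one_pow]
  have hs₀T : ∀ z ∈ T, s₀ z < 1/4 := by
    intro z hz
    rw [hs₀_apply]
    calc (r z) ^ k ≤ θ ^ k := pow_le_pow_left₀ (hr0 z) (hrT z hz) k
      _ < 1/4 := hk
  -- the neighborhood U of x and a test function with positive P-value
  set U : Set Y := {z | 1/2 < s₀ z} with hU
  have hUopen : IsOpen U := isOpen_lt continuous_const s₀.continuous
  have hxU : x ∈ U := by simp only [hU, Set.mem_setOf_eq, hs₀x]; norm_num
  obtain ⟨g₀, hg₀0, hg₀1, hg₀van, hg₀pos⟩ := hx U hUopen hxU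
  -- key estimate: P g₀ ≤ 2 * (1/2)^n * Q 1 for all n
  have hkey : ∀ n : ℕ, P g₀ ≤ 2 * (1/2)^n * Q 1 := by
    intro n
    set h : C(Y, ℝ) := s₀ ^ n with hh
    have hhA : h ∈ A := pow_mem hs₀A n
    have hh_apply : ∀ z, h z = (s₀ z) ^ n := fun z => ContinuousMap.pow_apply s₀ n z
    have hh0C : (0 : C(Y, ℝ)) ≤ h := by
      rw [ContinuousMap.le_def]; intro z
      rw [hh_apply]
      simp only [ContinuousMap.zero_apply]
      exact pow_nonneg (hs₀0 z) n
    set c : ℝ := 2 * (1/4)^n with hc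
    have hcpos : 0 < c := by positivity
    -- Q h ≤ c * Q 1
    have hQh : Q h ≤ c * Q 1 := by
      set g' : C(Y, ℝ) := (h - c • (1 : C(Y, ℝ))) ⊔ 0 with hg'
      have hg'_apply : ∀ z, g' z = (h z - c) ⊔ 0 := by
        intro z
        simp [hg', ContinuousMap.sup_apply, ContinuousMap.sub_apply,
          ContinuousMap.smul_apply, ContinuousMap.one_apply, smul_eq_mul]
      have hg'0 : (0 : C(Y, ℝ)) ≤ g' := by
        rw [ContinuousMap.le_def]; intro z
        rw [hg'_apply]
        simp only [ContinuousMap.zero_apply]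
        exact le_sup_right
      have hg'1 : g' ≤ 1 := by
        rw [ContinuousMap.le_def]; intro z
        rw [hg'_apply]
        simp only [ContinuousMap.one_apply]
        rw [sup_le_iff]
        constructor
        · have h1 := hh_apply z ▸ pow_le_one₀ (hs₀0 z) (hs₀1 z)
          linarith
        · norm_num
      have hV : IsOpen {z : Y | h z < c} := isOpen_lt h.continuous continuous_const
      have hTV : T ⊆ {z : Y | h z < c} := by
        intro z hz
        simp only [Set.mem_setOf_eq]
        rw [hh_apply]
        calc (s₀ z) ^ n ≤ (1/4)^n := pow_le_pow_left₀ (hs₀0 z) (le_of_lt (hs₀T z hz)) n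
          _ < c := by
              simp only [hc]
              nlinarith [pow_pos (show (0:ℝ) < 1/4 by norm_num) n]
      have hg'van : ∀ z ∈ {z : Y | h z < c}, g' z = 0 := by
        intro z hz
        simp only [Set.mem_setOf_eq] at hz
        rw [hg'_apply, sup_eq_right]
        linarith
      have hQg' : Q g' = 0 := posSupp_vanish hQ g' hg'0 hg'1 _ hV hTV hg'van
      have hhle : h ≤ c • (1 : C(Y, ℝ)) + g' := by
        rw [ContinuousMap.le_def]; intro z
        simp only [ContinuousMap.add_apply, ContinuousMap.smul_apply,
          ContinuousMap.one_apply, smul_eq_mul, mul_one]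
        rw [hg'_apply]
        rcases le_total (h z) c with hle | hle
        · have : (0:ℝ) ≤ (h z - c) ⊔ 0 := le_sup_right
          linarith
        · have : h z - c ≤ (h z - c) ⊔ 0 := le_sup_left
          linarith
      have hc1 : (0 : C(Y, ℝ)) ≤ c • (1 : C(Y, ℝ)) := by
        rw [ContinuousMap.le_def]; intro z
        simp only [ContinuousMap.zero_apply, ContinuousMap.smul_apply,
          ContinuousMap.one_apply, smul_eq_mul, mul_one]
        linarith
      calc Q h ≤ Q (c • (1 : C(Y, ℝ)) + g') := hQ.mono hh0C hhle
        _ = Q (c • (1 : C(Y, ℝ))) + Q g' := hQ.add _ _ hc1 hg'0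
        _ = c * Q 1 := by
            rw [hQg', hQ.smul c 1 (le_of_lt hcpos) (by rw [ContinuousMap.le_def]; intro z; simp)]
            ring
    -- g₀ ≤ 2^n • h
    have hgh : g₀ ≤ (2^n : ℝ) • h := by
      rw [ContinuousMap.le_def]; intro z
      simp only [ContinuousMap.smul_apply, smul_eq_mul]
      rw [hh_apply]
      by_cases hzU : z ∈ U
      · simp only [hU, Set.mem_setOf_eq] at hzU
        have h1 : (1/2 : ℝ)^n ≤ (s₀ z)^n := pow_le_pow_left₀ (by norm_num) (le_of_lt hzU) n
        have h2 : (2:ℝ)^n * (1/2:ℝ)^n = 1 := by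
          rw [← mul_pow]; norm_num
        have h3 := (ContinuousMap.le_def.mp hg₀1) z
        simp only [ContinuousMap.one_apply] at h3
        nlinarith [pow_pos (show (0:ℝ) < 2 by norm_num) n]
      · rw [hg₀van z hzU]
        have := pow_nonneg (hs₀0 z) n
        positivity
    have h2n : (0:ℝ) ≤ 2^n := by positivity
    calc P g₀ ≤ P ((2^n : ℝ) • h) := hP.mono hg₀0 hgh
      _ = 2^n * P h := hP.smul _ _ h2n hh0C
      _ = 2^n * Q h := by rw [hPQ h hhA hh0C]
      _ ≤ 2^n * (c * Q 1) := by
          apply mul_le_mul_of_nonneg_left hQh h2n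
      _ = 2 * (1/2)^n * Q 1 := by
          have h4 : (2:ℝ)^n * (1/4:ℝ)^n = (1/2:ℝ)^n := by
            rw [← mul_pow]; norm_num
          simp only [hc]
          linear_combination 2 * Q 1 * h4
  -- contradiction: choose n large
  obtain ⟨n, hn⟩ := exists_pow_lt_of_lt_one (show 0 < P g₀ / (2 * Q 1 + 1) by positivity)
    (show (1/2 : ℝ) < 1 by norm_num)
  have := hkey n
  have h1 : 2 * (1/2:ℝ)^n * Q 1 < P g₀ := by
    have h2 : (1/2:ℝ)^n * (2 * Q 1 + 1) < P g₀ :=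
      (lt_div_iff₀ (by positivity)).mp hn
    nlinarith [pow_pos (show (0:ℝ) < 1/2 by norm_num) n]
  linarith

end BoltStep

section PosPart

variable {Y : Type*} [TopologicalSpace Y] [CompactSpace Y] [T2Space Y]

/-- The set of values `Λ h` over `0 ≤ h ≤ f`. -/
def posSet (Λ : C(Y, ℝ) →L[ℝ] ℝ) (f : C(Y, ℝ)) : Set ℝ :=
  (fun h : C(Y, ℝ) => Λ h) '' {h | 0 ≤ h ∧ h ≤ f}

/-- The positive part of a continuous linear functional, on the nonnegative cone. -/
noncomputable def posPartFn (Λ : C(Y, ℝ) →L[ℝ] ℝ) (f : C(Y, ℝ)) : ℝ :=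
  sSup (posSet Λ f)

theorem posSet_nonempty (Λ : C(Y, ℝ) →L[ℝ] ℝ) {f : C(Y, ℝ)} (hf : 0 ≤ f) :
    (posSet Λ f).Nonempty :=
  ⟨Λ 0, 0, ⟨le_rfl, hf⟩, rfl⟩

theorem norm_le_of_le {f h : C(Y, ℝ)} (h0 : 0 ≤ h) (hle : h ≤ f) : ‖h‖ ≤ ‖f‖ := by
  rw [ContinuousMap.norm_le h (norm_nonneg f)]
  intro x
  have h1 := (ContinuousMap.le_def.mp h0) x
  have h2 := (ContinuousMap.le_def.mp hle) x
  simp only [ContinuousMap.zero_apply] at h1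
  rw [Real.norm_eq_abs, abs_of_nonneg h1]
  calc h x ≤ f x := h2
    _ ≤ |f x| := le_abs_self _
    _ ≤ ‖f‖ := f.norm_coe_le_norm x

theorem posSet_bddAbove (Λ : C(Y, ℝ) →L[ℝ] ℝ) {f : C(Y, ℝ)} (hf : 0 ≤ f) :
    BddAbove (posSet Λ f) := by
  refine ⟨‖Λ‖ * ‖f‖, ?_⟩
  rintro r ⟨h, ⟨h0, hle⟩, rfl⟩
  calc Λ h ≤ |Λ h| := le_abs_self _
    _ = ‖Λ h‖ := rfl
    _ ≤ ‖Λ‖ * ‖h‖ := Λ.le_opNorm h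
    _ ≤ ‖Λ‖ * ‖f‖ := mul_le_mul_of_nonneg_left (norm_le_of_le h0 hle) (norm_nonneg Λ)

theorem le_posPartFn (Λ : C(Y, ℝ) →L[ℝ] ℝ) {f h : C(Y, ℝ)} (hf : 0 ≤ f)
    (h0 : 0 ≤ h) (hle : h ≤ f) : Λ h ≤ posPartFn Λ f :=
  le_csSup (posSet_bddAbove Λ hf) ⟨h, ⟨h0, hle⟩, rfl⟩

theorem posPartFn_le (Λ : C(Y, ℝ) →L[ℝ] ℝ) {f : C(Y, ℝ)} (hf : 0 ≤ f) {B : ℝ}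
    (hB : ∀ h : C(Y, ℝ), 0 ≤ h → h ≤ f → Λ h ≤ B) : posPartFn Λ f ≤ B := by
  apply csSup_le (posSet_nonempty Λ hf)
  rintro r ⟨h, ⟨h0, hle⟩, rfl⟩
  exact hB h h0 hle

theorem posPartFn_nonneg (Λ : C(Y, ℝ) →L[ℝ] ℝ) {f : C(Y, ℝ)} (hf : 0 ≤ f) :
    0 ≤ posPartFn Λ f := by
  have := le_posPartFn Λ hf le_rfl hf
  simpa using this

theorem self_le_posPartFn (Λ : C(Y, ℝ) →L[ℝ] ℝ) {f : C(Y, ℝ)} (hf : 0 ≤ f) :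
    Λ f ≤ posPartFn Λ f := le_posPartFn Λ hf hf le_rfl

theorem posPartFn_add (Λ : C(Y, ℝ) →L[ℝ] ℝ) {f g : C(Y, ℝ)} (hf : 0 ≤ f) (hg : 0 ≤ g) :
    posPartFn Λ (f + g) = posPartFn Λ f + posPartFn Λ g := by
  have hfg : (0 : C(Y, ℝ)) ≤ f + g := by
    rw [ContinuousMap.le_def] at *
    intro x
    have := hf x; have := hg x
    simp only [ContinuousMap.zero_apply, ContinuousMap.add_apply] at *
    linarith
  apply le_antisymm
  · apply posPartFn_le Λ hfg
    intro h h0 hle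
    -- split h = (h ⊓ f) + (h - h ⊓ f)
    set h₁ : C(Y, ℝ) := h ⊓ f with hh₁
    set h₂ : C(Y, ℝ) := h - h₁ with hh₂
    have h₁0 : 0 ≤ h₁ := le_inf h0 hf
    have h₁f : h₁ ≤ f := inf_le_right
    have h₁h : h₁ ≤ h := inf_le_left
    have h₂0 : 0 ≤ h₂ := by
      rw [ContinuousMap.le_def]; intro x
      have := (ContinuousMap.le_def.mp h₁h) x
      simp only [hh₂, ContinuousMap.zero_apply, ContinuousMap.sub_apply]
      linarith
    have h₂g : h₂ ≤ g := by
      rw [ContinuousMap.le_def]; intro x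
      have h3 := (ContinuousMap.le_def.mp hle) x
      have h4 := (ContinuousMap.le_def.mp hg) x
      have h5 := (ContinuousMap.le_def.mp h0) x
      have h6 := (ContinuousMap.le_def.mp hf) x
      simp only [ContinuousMap.zero_apply, ContinuousMap.add_apply] at h3 h4 h5 h6
      simp only [hh₂, hh₁, ContinuousMap.sub_apply, ContinuousMap.inf_apply]
      rcases le_total (h x) (f x) with hc | hc
      · rw [min_eq_left hc]; linarith
      · rw [min_eq_right hc]; linarith
    have : Λ h = Λ h₁ + Λ h₂ := by
      simp only [hh₂, map_sub]; ring
    rw [this]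
    exact add_le_add (le_posPartFn Λ hf h₁0 h₁f) (le_posPartFn Λ hg h₂0 h₂g)
  · -- sup of sums
    rw [← sub_nonneg]
    have key : ∀ h₁ : C(Y, ℝ), 0 ≤ h₁ → h₁ ≤ f →
        ∀ h₂ : C(Y, ℝ), 0 ≤ h₂ → h₂ ≤ g → Λ h₁ + Λ h₂ ≤ posPartFn Λ (f + g) := by
      intro h₁ h10 h1f h₂ h20 h2g
      have hsum0 : (0 : C(Y, ℝ)) ≤ h₁ + h₂ := by
        rw [ContinuousMap.le_def] at *
        intro x
        have := h10 x; have := h20 x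
        simp only [ContinuousMap.zero_apply, ContinuousMap.add_apply] at *
        linarith
      have hsumle : h₁ + h₂ ≤ f + g := by
        rw [ContinuousMap.le_def] at *
        intro x
        have := h1f x; have := h2g x
        simp only [ContinuousMap.add_apply] at *
        linarith
      have := le_posPartFn Λ hfg hsum0 hsumle
      simpa [map_add] using this
    have step1 : ∀ h₁ : C(Y, ℝ), 0 ≤ h₁ → h₁ ≤ f →
        posPartFn Λ g ≤ posPartFn Λ (f + g) - Λ h₁ := by
      intro h₁ h10 h1f
      apply posPartFn_le Λ hg
      intro h₂ h20 h2g
      have := key h₁ h10 h1f h₂ h20 h2g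
      linarith
    have step2 : posPartFn Λ f ≤ posPartFn Λ (f + g) - posPartFn Λ g := by
      apply posPartFn_le Λ hf
      intro h₁ h10 h1f
      have := step1 h₁ h10 h1f
      linarith
    linarith

theorem posPartFn_zero (Λ : C(Y, ℝ) →L[ℝ] ℝ) : posPartFn Λ 0 = 0 := by
  apply le_antisymm
  · apply posPartFn_le Λ le_rfl
    intro h h0 hle
    have : h = 0 := le_antisymm hle h0
    simp [this]
  · exact posPartFn_nonneg Λ le_rfl

theorem posPartFn_smul (Λ : C(Y, ℝ) →L[ℝ] ℝ) {f : C(Y, ℝ)} (hf : 0 ≤ f) {c : ℝ} (hc : 0 ≤ c) :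
    posPartFn Λ (c • f) = c * posPartFn Λ f := by
  rcases eq_or_lt_of_le hc with rfl | hc
  · simp [posPartFn_zero]
  have hcf : (0 : C(Y, ℝ)) ≤ c • f := by
    rw [ContinuousMap.le_def] at *
    intro x
    have := hf x
    simp only [ContinuousMap.zero_apply, ContinuousMap.smul_apply, smul_eq_mul] at *
    positivity
  apply le_antisymm
  · apply posPartFn_le Λ hcf
    intro h h0 hle
    have h1 : Λ h = c * Λ (c⁻¹ • h) := by
      rw [map_smul]
      simp only [smul_eq_mul]
      field_simp
    rw [h1]
    apply mul_le_mul_of_nonneg_left _ (le_of_lt hc)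
    apply le_posPartFn Λ hf
    · rw [ContinuousMap.le_def] at *
      intro x
      have := h0 x
      simp only [ContinuousMap.zero_apply, ContinuousMap.smul_apply, smul_eq_mul] at *
      positivity
    · rw [ContinuousMap.le_def] at *
      intro x
      have := hle x
      simp only [ContinuousMap.smul_apply, smul_eq_mul] at *
      rw [inv_mul_le_iff₀ hc]
      linarith [this]
  · rw [← le_div_iff₀' hc]
    apply posPartFn_le Λ hf
    intro h h0 hle
    rw [le_div_iff₀' hc]
    have h1 : c * Λ h = Λ (c • h) := by rw [map_smul]; simp
    rw [h1]
    apply le_posPartFn Λ hcf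
    · rw [ContinuousMap.le_def] at *
      intro x
      have := h0 x
      simp only [ContinuousMap.zero_apply, ContinuousMap.smul_apply, smul_eq_mul] at *
      positivity
    · rw [ContinuousMap.le_def] at *
      intro x
      have := hle x
      simp only [ContinuousMap.smul_apply, smul_eq_mul] at *
      nlinarith

theorem posPartFn_isPosFunc (Λ : C(Y, ℝ) →L[ℝ] ℝ) : IsPosFunc (posPartFn Λ) where
  add := fun f g hf hg => posPartFn_add Λ hf hg
  nonneg := fun f hf => posPartFn_nonneg Λ hf
  smul := fun c f hc hf => posPartFn_smul Λ hf hc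

theorem negPartFn_isPosFunc (Λ : C(Y, ℝ) →L[ℝ] ℝ) :
    IsPosFunc (fun f => posPartFn Λ f - Λ f) where
  add := fun f g hf hg => by
    simp only [posPartFn_add Λ hf hg, map_add]; ring
  nonneg := fun f hf => by
    have := self_le_posPartFn Λ hf
    simp only [sub_nonneg]
    exact this
  smul := fun c f hc hf => by
    simp only [posPartFn_smul Λ hf hc, map_smul, smul_eq_mul]; ring

end PosPart


section Chain

theorem exists_alt_chain {α : Type*} (Sp Sm : Set α) (R₁ R₂ : α → α → Prop)
    (h0 : Sp.Nonempty) (h1 : ∀ x ∈ Sp, ∃ y ∈ Sm, R₁ x y)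
    (h2 : ∀ y ∈ Sm, ∃ x ∈ Sp, R₂ y x) :
    ∃ x : ℕ → α, (∀ n, x n ∈ (if n % 2 = 0 then Sp else Sm)) ∧
      ∀ n, (if n % 2 = 0 then R₁ else R₂) (x n) (x (n + 1)) := by
  classical
  set C : ℕ → Set α := fun n => if n % 2 = 0 then Sp else Sm with hC
  have step : ∀ n : ℕ, ∀ x : α, x ∈ C n →
      ∃ y, y ∈ C (n + 1) ∧ (if n % 2 = 0 then R₁ else R₂) x y := by
    intro n x hx
    rcases Nat.even_or_odd n with he | ho
    · have e0 : n % 2 = 0 := Nat.even_iff.mp he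
      have e1 : (n + 1) % 2 = 1 := by omega
      rw [hC] at hx ⊢
      simp only [e0, e1, if_pos rfl] at hx ⊢
      simp only [show (1:ℕ) ≠ 0 by norm_num, if_false, if_true]
      obtain ⟨y, hy, hr⟩ := h1 x hx
      exact ⟨y, hy, by simp [e0, hr]⟩
    · have e0 : n % 2 = 1 := Nat.odd_iff.mp ho
      have e1 : (n + 1) % 2 = 0 := by omega
      rw [hC] at hx ⊢
      simp only [e0, e1] at hx ⊢
      simp only [show (1:ℕ) ≠ 0 by norm_num, if_false, if_true] at hx ⊢
      obtain ⟨y, hy, hr⟩ := h2 x hx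
      exact ⟨y, hy, by simp [e0, hr]⟩
  let seq : ∀ n : ℕ, {z : α // z ∈ C n} := fun n =>
    Nat.rec ⟨h0.choose, by simp only [hC, Nat.zero_mod, if_pos rfl]; exact h0.choose_spec⟩
      (fun k ih => ⟨(step k ih.1 ih.2).choose, (step k ih.1 ih.2).choose_spec.1⟩) n
  refine ⟨fun n => (seq n).1, fun n => (seq n).2, fun n => ?_⟩
  exact (step n (seq n).1 (seq n).2).choose_spec.2

end Chain

theorem stmt13 [MetricSpace X] [CompactSpace X]
    (A₁ A₂ : Subalgebra ℝ C(X, ℝ))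
    (hA₁ : IsClosed (A₁ : Set C(X, ℝ))) (hA₂ : IsClosed (A₂ : Set C(X, ℝ)))
    (f u₀ : C(X, ℝ)) (hu₀ : u₀ ∈ sumSet A₁ A₂)
    (hf : f ∉ closure (sumSet A₁ A₂))
    (hbest : ∀ u ∈ sumSet A₁ A₂, ‖f - u₀‖ ≤ ‖f - u‖) :
    (∃ n : ℕ, ∃ x : Fin (2 * n) → X,
        IsClosedBolt (algRel A₁) (algRel A₂) x ∧ ExtremalFin (f - u₀) x) ∨
    (∃ x : ℕ → X,
        IsInfBolt (algRel A₁) (algRel A₂) x ∧ ExtremalSeq (f - u₀) x) := by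
  classical
  set w : C(X, ℝ) := f - u₀ with hw
  set M : ℝ := ‖w‖ with hMdef
  -- M > 0
  have hu₀cl : u₀ ∈ closure (sumSet A₁ A₂) := subset_closure hu₀
  have hM : 0 < M := by
    rcases eq_or_lt_of_le (norm_nonneg w) with h0 | h0
    · exfalso
      have : w = 0 := by
        rw [← norm_eq_zero]; exact h0.symm
      have hfu : f = u₀ := by
        have := sub_eq_zero.mp (hw ▸ this)
        exact this
      exact hf (hfu ▸ hu₀cl)
    · exact h0
  -- the closed subspace S
  set S₀ : Submodule ℝ C(X, ℝ) := Subalgebra.toSubmodule A₁ ⊔ Subalgebra.toSubmodule A₂ with hS₀def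
  have hS₀ : (S₀ : Set C(X, ℝ)) = sumSet A₁ A₂ := by
    ext u
    simp only [hS₀def, SetLike.mem_coe, Submodule.mem_sup, sumSet, Set.mem_setOf_eq]
    constructor
    · rintro ⟨y, hy, z, hz, rfl⟩
      exact ⟨y, hy, z, hz, rfl⟩
    · rintro ⟨y, hy, z, hz, rfl⟩
      exact ⟨y, hy, z, hz, rfl⟩
  set S : Submodule ℝ C(X, ℝ) := S₀.topologicalClosure with hSdef
  have hScoe : (S : Set C(X, ℝ)) = closure (sumSet A₁ A₂) := by
    rw [hSdef, Submodule.topologicalClosure_coe, hS₀]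
  haveI hScl : IsClosed (S : Set C(X, ℝ)) := by
    rw [hScoe]; exact isClosed_closure
  have hfS : f ∉ S := by
    intro hfs
    exact hf (hScoe ▸ hfs)
  have hsumS : ∀ u ∈ sumSet A₁ A₂, u ∈ S := by
    intro u hu
    have : u ∈ closure (sumSet A₁ A₂) := subset_closure hu
    rwa [← hScoe] at this
  -- best approximation over the closure
  have hbest' : ∀ u ∈ closure (sumSet A₁ A₂), ‖f - u₀‖ ≤ ‖f - u‖ := by
    intro u hu
    have hcl : closure (sumSet A₁ A₂) ⊆ {u | ‖f - u₀‖ ≤ ‖f - u‖} :=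
      closure_minimal hbest
        (isClosed_le continuous_const ((continuous_const.sub continuous_id).norm))
    exact hcl hu
  -- the quotient norm of mk f equals M
  have hne : (Submodule.Quotient.mk f : C(X, ℝ) ⧸ S) ≠ 0 := by
    rw [Ne, Submodule.Quotient.mk_eq_zero]
    exact hfS
  have hmk_eq : (Submodule.Quotient.mk f : C(X, ℝ) ⧸ S) = Submodule.Quotient.mk w := by
    rw [Submodule.Quotient.eq]
    have : f - w = u₀ := by rw [hw]; ring
    rw [this]
    exact hsumS u₀ hu₀
  have hmkle : ‖(Submodule.Quotient.mk f : C(X, ℝ) ⧸ S)‖ ≤ M := by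
    rw [hmk_eq]
    exact Submodule.Quotient.norm_mk_le (S := S) w
  have hmkge : M ≤ ‖(Submodule.Quotient.mk f : C(X, ℝ) ⧸ S)‖ := by
    by_contra hlt
    push_neg at hlt
    obtain ⟨m, hm, hmlt⟩ := Submodule.Quotient.norm_mk_lt
      (Submodule.Quotient.mk f : C(X, ℝ) ⧸ S)
      (show 0 < M - ‖(Submodule.Quotient.mk f : C(X, ℝ) ⧸ S)‖ by linarith)
    have hmS : f - m ∈ S := by
      have h1 : m - f ∈ S := (Submodule.Quotient.eq S).mp hm
      have := S.neg_mem h1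
      simpa using this
    have hu : (f - m) ∈ closure (sumSet A₁ A₂) := by
      rw [← hScoe]; exact hmS
    have h2 := hbest' (f - m) hu
    have h3 : f - (f - m) = m := by ring
    rw [h3] at h2
    rw [← hw, ← hMdef] at h2
    linarith
  have hmkf : ‖(Submodule.Quotient.mk f : C(X, ℝ) ⧸ S)‖ = M := le_antisymm hmkle hmkge
  -- the Hahn–Banach functional
  obtain ⟨g, hgnorm, hgval⟩ := exists_dual_vector ℝ (Submodule.Quotient.mk f : C(X, ℝ) ⧸ S) (by rw [hmkf]; exact ne_of_gt hM)
  have hcont : Continuous (S.mkQ : C(X, ℝ) →ₗ[ℝ] C(X, ℝ) ⧸ S) :=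
    AddMonoidHomClass.continuous_of_bound (S.mkQ : C(X, ℝ) →ₗ[ℝ] C(X, ℝ) ⧸ S) 1
      (fun z => by
        rw [Submodule.mkQ_apply, one_mul]
        exact Submodule.Quotient.norm_mk_le (S := S) z)
  set mkClm : C(X, ℝ) →L[ℝ] (C(X, ℝ) ⧸ S) := ⟨S.mkQ, hcont⟩ with hmkClm
  set Λ : C(X, ℝ) →L[ℝ] ℝ := g.comp mkClm with hΛdef
  have hΛapp : ∀ h : C(X, ℝ), Λ h = g (Submodule.Quotient.mk h) := fun h => rfl
  have hΛle : ∀ z : C(X, ℝ), Λ z ≤ ‖z‖ := by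
    intro z
    rw [hΛapp]
    calc g (Submodule.Quotient.mk z) ≤ ‖g (Submodule.Quotient.mk z)‖ := le_abs_self _
      _ ≤ ‖g‖ * ‖(Submodule.Quotient.mk z : C(X, ℝ) ⧸ S)‖ := g.le_opNorm _
      _ = ‖(Submodule.Quotient.mk z : C(X, ℝ) ⧸ S)‖ := by rw [hgnorm]; ring
      _ ≤ ‖z‖ := Submodule.Quotient.norm_mk_le (S := S) z
  have hΛvanish : ∀ u ∈ sumSet A₁ A₂, Λ u = 0 := by
    intro u hu
    rw [hΛapp]
    have : (Submodule.Quotient.mk u : C(X, ℝ) ⧸ S) = 0 :=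
      (Submodule.Quotient.mk_eq_zero S).mpr (hsumS u hu)
    rw [this, map_zero]
  have hΛw : Λ w = M := by
    rw [hΛapp, ← hmk_eq, hgval, hmkf]
    norm_num
  have hΛA₁ : ∀ h ∈ A₁, Λ h = 0 := fun h hh =>
    hΛvanish h ⟨h, hh, 0, zero_mem _, by ring⟩
  have hΛA₂ : ∀ h ∈ A₂, Λ h = 0 := fun h hh =>
    hΛvanish h ⟨0, zero_mem _, h, hh, by ring⟩
  have hΛ1 : Λ (1 : C(X, ℝ)) = 0 := hΛA₁ 1 (one_mem A₁)
  -- Jordan decomposition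
  set Λp : C(X, ℝ) → ℝ := posPartFn Λ with hΛp
  set Λm : C(X, ℝ) → ℝ := fun h => posPartFn Λ h - Λ h with hΛm
  have hP : IsPosFunc Λp := posPartFn_isPosFunc Λ
  have hQ : IsPosFunc Λm := negPartFn_isPosFunc Λ
  have hone : (0 : C(X, ℝ)) ≤ 1 := by
    rw [ContinuousMap.le_def]; intro z; simp
  -- Λp 1 ≤ 1/2
  have hΛp1_le : Λp 1 ≤ 1/2 := by
    have key : ∀ h : C(X, ℝ), 0 ≤ h → h ≤ 1 → ∀ h' : C(X, ℝ), 0 ≤ h' → h' ≤ 1 →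
        Λ h + Λ h' ≤ 1 := by
      intro h h0 h1 h' h0' h1'
      have heq : Λ h + Λ h' = Λ (h + h' - 1) + Λ 1 := by
        simp only [map_sub, map_add]
        ring
      rw [heq, hΛ1, add_zero]
      calc Λ (h + h' - 1) ≤ ‖h + h' - 1‖ := hΛle _
        _ ≤ 1 := by
            rw [ContinuousMap.norm_le _ (zero_le_one)]
            intro z
            have a1 := (ContinuousMap.le_def.mp h0) z
            have a2 := (ContinuousMap.le_def.mp h1) z
            have a3 := (ContinuousMap.le_def.mp h0') z
            have a4 := (ContinuousMap.le_def.mp h1') z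
            simp only [ContinuousMap.zero_apply, ContinuousMap.one_apply] at a1 a2 a3 a4
            simp only [ContinuousMap.sub_apply, ContinuousMap.add_apply,
              ContinuousMap.one_apply, Real.norm_eq_abs]
            rw [abs_le]
            constructor <;> linarith
    have st1 : ∀ h' : C(X, ℝ), 0 ≤ h' → h' ≤ 1 → Λp 1 ≤ 1 - Λ h' := by
      intro h' h0' h1'
      apply posPartFn_le Λ hone
      intro h h0 h1
      have := key h h0 h1 h' h0' h1'
      linarith
    have st2 : Λp 1 ≤ 1 - Λp 1 := by
      have : posPartFn Λ 1 ≤ 1 - Λp 1 := by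
        apply posPartFn_le Λ hone
        intro h' h0' h1'
        have := st1 h' h0' h1'
        linarith
      exact this
    linarith
  -- the extremal functions a and b
  set a : C(X, ℝ) := w + M • (1 : C(X, ℝ)) with ha
  set b : C(X, ℝ) := M • (1 : C(X, ℝ)) - w with hb
  have hwbound : ∀ z, |w z| ≤ M := fun z => w.norm_coe_le_norm z
  have ha0 : (0 : C(X, ℝ)) ≤ a := by
    rw [ContinuousMap.le_def]; intro z
    have := abs_le.mp (hwbound z)
    simp only [ha, ContinuousMap.zero_apply, ContinuousMap.add_apply,
      ContinuousMap.smul_apply, ContinuousMap.one_apply, smul_eq_mul, mul_one]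
    linarith [this.1]
  have hb0 : (0 : C(X, ℝ)) ≤ b := by
    rw [ContinuousMap.le_def]; intro z
    have := abs_le.mp (hwbound z)
    simp only [hb, ContinuousMap.zero_apply, ContinuousMap.sub_apply,
      ContinuousMap.smul_apply, ContinuousMap.one_apply, smul_eq_mul, mul_one]
    linarith [this.2]
  have hab : a + b = (2 * M) • (1 : C(X, ℝ)) := by
    ext z
    simp only [ha, hb, ContinuousMap.add_apply, ContinuousMap.sub_apply,
      ContinuousMap.smul_apply, ContinuousMap.one_apply, smul_eq_mul, mul_one]
    ring
  have hΛa : Λ a = M := by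
    simp only [ha, map_add, map_smul, hΛ1, smul_eq_mul, mul_zero, add_zero, hΛw]
  have hΛb : Λ b = -M := by
    simp only [hb, map_sub, map_smul, hΛ1, smul_eq_mul, mul_zero, zero_sub, hΛw]
  have hΛpab : Λp a + Λp b = 2 * M * Λp 1 := by
    rw [hΛp, ← posPartFn_add Λ ha0 hb0, hab, posPartFn_smul Λ hone (by linarith)]
  have hΛpa_le : Λp a ≤ M := by
    have h1 : Λp b ≥ 0 := posPartFn_nonneg Λ hb0
    have h2 : Λp 1 ≥ 0 := posPartFn_nonneg Λ hone
    nlinarith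
  have hma : Λm a = 0 := by
    have h1 : Λ a ≤ Λp a := self_le_posPartFn Λ ha0
    simp only [hΛm, hΛa]
    have := hΛpa_le
    simp only [hΛp] at this h1 ⊢
    linarith
  have hΛpa : Λp a = M := by
    simp only [hΛm, hΛa] at hma
    simp only [hΛp]
    linarith
  have hpb : Λp b = 0 := by
    have h1 : Λp b ≥ 0 := posPartFn_nonneg Λ hb0
    nlinarith
  have hΛp1 : Λp 1 = 1/2 := by
    have : 2 * M * Λp 1 = M := by
      rw [← hΛpab, hΛpa, hpb]; ring
    have h2 : 2 * M * Λp 1 = 2 * M * (1/2) := by rw [this]; ring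
    exact mul_left_cancel₀ (by positivity) h2
  have hΛm1 : Λm 1 = 1/2 := by
    simp only [hΛm, hΛ1, sub_zero]
    simp only [hΛp] at hΛp1
    exact hΛp1
  have hmb : Λm b = M := by
    simp only [hΛm, hΛb]
    have : posPartFn Λ b = 0 := hpb
    rw [this]; ring
  -- supports lie in the extremal sets
  have hsubp : posSupp Λp ⊆ {z | w z = M} := by
    intro z hz
    by_contra hzne
    have hzlt : w z < M := by
      rcases lt_or_eq_of_le (abs_le.mp (hwbound z)).2 with h | h
      · exact h
      · exact absurd h hzne
    set δ : ℝ := M - w z with hδ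
    have hδpos : 0 < δ := by simp only [hδ]; linarith
    set U : Set X := {y | w y < M - δ/2} with hU
    have hUopen : IsOpen U := isOpen_lt w.continuous continuous_const
    have hzU : z ∈ U := by
      simp only [hU, Set.mem_setOf_eq]
      simp only [hδ]; linarith
    obtain ⟨g₀, hg₀0, hg₀1, hg₀van, hg₀pos⟩ := hz U hUopen hzU
    have hle : g₀ ≤ (2/δ) • b := by
      rw [ContinuousMap.le_def]; intro y
      simp only [ContinuousMap.smul_apply, smul_eq_mul]
      by_cases hyU : y ∈ U
      · simp only [hU, Set.mem_setOf_eq] at hyU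
        have hby : b y = M - w y := by
          simp [hb, ContinuousMap.sub_apply, ContinuousMap.smul_apply,
            ContinuousMap.one_apply, smul_eq_mul, mul_one]
        have h1 : δ/2 < b y := by rw [hby]; linarith
        have h2 := (ContinuousMap.le_def.mp hg₀1) y
        simp only [ContinuousMap.one_apply] at h2
        have h3 : (2/δ) * (δ/2) = 1 := by field_simp
        have h4 : (1:ℝ) ≤ 2/δ * b y := by
          rw [← h3]
          apply mul_le_mul_of_nonneg_left (le_of_lt h1) (by positivity)
        linarith
      · rw [hg₀van y hyU]
        have h1 := (ContinuousMap.le_def.mp hb0) y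
        simp only [ContinuousMap.zero_apply] at h1
        positivity
    have : Λp g₀ ≤ 0 := by
      calc Λp g₀ ≤ Λp ((2/δ) • b) := hP.mono hg₀0 hle
        _ = (2/δ) * Λp b := hP.smul _ _ (by positivity) hb0
        _ = 0 := by rw [hpb]; ring
    linarith
  have hsubm : posSupp Λm ⊆ {z | w z = -M} := by
    intro z hz
    by_contra hzne
    have hzgt : -M < w z := by
      rcases lt_or_eq_of_le (abs_le.mp (hwbound z)).1 with h | h
      · exact h
      · exact absurd h.symm hzne
    set δ : ℝ := w z + M with hδ
    have hδpos : 0 < δ := by simp only [hδ]; linarith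
    set U : Set X := {y | -M + δ/2 < w y} with hU
    have hUopen : IsOpen U := isOpen_lt continuous_const w.continuous
    have hzU : z ∈ U := by
      simp only [hU, Set.mem_setOf_eq]
      simp only [hδ]; linarith
    obtain ⟨g₀, hg₀0, hg₀1, hg₀van, hg₀pos⟩ := hz U hUopen hzU
    have hle : g₀ ≤ (2/δ) • a := by
      rw [ContinuousMap.le_def]; intro y
      simp only [ContinuousMap.smul_apply, smul_eq_mul]
      by_cases hyU : y ∈ U
      · simp only [hU, Set.mem_setOf_eq] at hyU
        have hay : a y = w y + M := by
          simp [ha, ContinuousMap.add_apply, ContinuousMap.smul_apply,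
            ContinuousMap.one_apply, smul_eq_mul, mul_one]
        have h1 : δ/2 < a y := by rw [hay]; linarith
        have h2 := (ContinuousMap.le_def.mp hg₀1) y
        simp only [ContinuousMap.one_apply] at h2
        have h3 : (2/δ) * (δ/2) = 1 := by field_simp
        have h4 : (1:ℝ) ≤ 2/δ * a y := by
          rw [← h3]
          apply mul_le_mul_of_nonneg_left (le_of_lt h1) (by positivity)
        linarith
      · rw [hg₀van y hyU]
        have h1 := (ContinuousMap.le_def.mp ha0) y
        simp only [ContinuousMap.zero_apply] at h1
        positivity
    have : Λm g₀ ≤ 0 := by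
      calc Λm g₀ ≤ Λm ((2/δ) • a) := hQ.mono hg₀0 hle
        _ = (2/δ) * Λm a := hQ.smul _ _ (by positivity) ha0
        _ = 0 := by rw [hma]; ring
    linarith
  -- the two bolt steps
  have hPQ₁ : ∀ h ∈ A₁, (0 : C(X, ℝ)) ≤ h → Λp h = Λm h := by
    intro h hh _
    simp only [hΛp, hΛm, hΛA₁ h hh, sub_zero]
  have hPQ₂ : ∀ h ∈ A₂, (0 : C(X, ℝ)) ≤ h → Λm h = Λp h := by
    intro h hh _
    simp only [hΛp, hΛm, hΛA₂ h hh, sub_zero]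
  have hQ1pos : 0 < Λm 1 := by rw [hΛm1]; norm_num
  have hP1pos : 0 < Λp 1 := by rw [hΛp1]; norm_num
  have step1 : ∀ x ∈ posSupp Λp, ∃ y ∈ posSupp Λm, algRel A₁ x y :=
    fun x hx => boltStep hP hQ A₁ hPQ₁ hQ1pos hx
  have step2 : ∀ y ∈ posSupp Λm, ∃ x ∈ posSupp Λp, algRel A₂ y x :=
    fun y hy => boltStep hQ hP A₂ hPQ₂ hP1pos hy
  have hstart : (posSupp Λp).Nonempty := posSupp_nonempty hP hP1pos
  -- build the infinite bolt
  obtain ⟨x, hxmem, hxrel⟩ := exists_alt_chain (posSupp Λp) (posSupp Λm)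
    (algRel A₁) (algRel A₂) hstart step1 step2
  have hval : ∀ n : ℕ, w (x n) = (-1 : ℝ)^n * M := by
    intro n
    rcases Nat.even_or_odd n with he | ho
    · have e0 : n % 2 = 0 := Nat.even_iff.mp he
      have := hxmem n
      rw [if_pos e0] at this
      have := hsubp this
      simp only [Set.mem_setOf_eq] at this
      rw [this, he.neg_one_pow, one_mul]
    · have e0 : n % 2 ≠ 0 := by
        rw [Nat.odd_iff] at ho; omega
      have := hxmem n
      rw [if_neg e0] at this
      have := hsubm this
      simp only [Set.mem_setOf_eq] at this
      rw [this, ho.neg_one_pow]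
      ring
  right
  refine ⟨x, Or.inl ?_, Or.inl ?_⟩
  · intro i
    constructor
    · intro heq
      have h1 := hval i
      have h2 := hval (i + 1)
      rw [heq] at h1
      rw [h1] at h2
      have h3 : ((-1 : ℝ))^(i+1) = -((-1:ℝ))^i := by
        rw [pow_succ]; ring
      rw [h3] at h2
      have h4 : ((-1:ℝ))^i ≠ 0 := by
        apply pow_ne_zero; norm_num
      have h5 : (2 : ℝ) * ((-1:ℝ))^i * M = 0 := by linarith
      rcases mul_eq_zero.mp h5 with h6 | h6
      · rcases mul_eq_zero.mp h6 with h7 | h7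
        · norm_num at h7
        · exact h4 h7
      · exact absurd h6 (ne_of_gt hM)
    · exact hxrel i
  · intro i
    exact hval i
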